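/- Let K be a field complete with respect to a nontrivial absolute value |·|_K, and let E be a finite field extension of K. Then there is at most one absolute value on E extending |·|_K: if |·|₁ and |·|₂ are absolute values on E whose restrictions to K both equal |·|_K, then |·|₁ = |·|₂. -/

import Mathlib

/-- A sequence in a field `K` is Cauchy with respect to the absolute value `f`. -/
def AbsCauchySeq {K : Type*} [Field K] (f : AbsoluteValue K ℝ) (x : ℕ → K) : Prop :=
  ∀ ε : ℝ, 0 < ε → ∃ N : ℕ, ∀ m ≥ N, ∀ n ≥ N, f (x m - x n) < ε

/-- A field `K` is complete with respect to the absolute value `f` if every Cauchy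
sequence (for the metric `d(x,y) = f (x - y)`) converges. -/
def AbsComplete {K : Type*} [Field K] (f : AbsoluteValue K ℝ) : Prop :=
  ∀ x : ℕ → K, AbsCauchySeq f x →
    ∃ l : K, ∀ ε : ℝ, 0 < ε → ∃ N : ℕ, ∀ n ≥ N, f (x n - l) < ε

/-- Power trick: a multiplicative bound `f₁ ≤ C * f₂` between absolute values upgrades
to `f₁ ≤ f₂`. -/
private lemma abs_le_of_bound {E : Type*} [Field E] (f₁ f₂ : AbsoluteValue E ℝ) (C : ℝ)
    (h : ∀ x : E, f₁ x ≤ C * f₂ x) : ∀ x : E, f₁ x ≤ f₂ x := by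
  intro x
  rcases eq_or_ne x 0 with rfl | hx
  · simp
  have h2 : 0 < f₂ x := f₂.pos hx
  by_contra hlt
  push_neg at hlt
  have hr : 1 < f₁ x / f₂ x := (one_lt_div h2).2 hlt
  obtain ⟨n, hn⟩ := pow_unbounded_of_one_lt C hr
  have hb := h (x ^ n)
  rw [map_pow, map_pow] at hb
  have : (f₁ x / f₂ x) ^ n ≤ C := by
    rw [div_pow, div_le_iff₀ (by positivity)]
    exact hb
  linarith

private lemma abs_le_aux {K E : Type*} [Field K] [Field E] [Algebra K E]
    [FiniteDimensional K E] (fK : AbsoluteValue K ℝ)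
    (hnontriv : ∃ x : K, x ≠ 0 ∧ fK x ≠ 1) (hcomplete : AbsComplete fK)
    (f₁ f₂ : AbsoluteValue E ℝ)
    (h₁ : ∀ c : K, f₁ (algebraMap K E c) = fK c)
    (h₂ : ∀ c : K, f₂ (algebraMap K E c) = fK c) :
    ∀ x : E, f₁ x ≤ f₂ x := by
  letI : NontriviallyNormedField (WithAbs fK) :=
    { WithAbs.normedField fK with
      non_trivial := by
        obtain ⟨x, hx0, hx1⟩ := hnontriv
        have hxpos : 0 < fK x := fK.pos hx0
        rcases lt_or_gt_of_ne hx1 with h | h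
        · refine ⟨(WithAbs.equiv fK).symm x⁻¹, ?_⟩
          have : ‖(WithAbs.equiv fK).symm x⁻¹‖ = fK x⁻¹ := rfl
          rw [this, map_inv₀]
          exact (one_lt_inv₀ hxpos).2 h
        · exact ⟨(WithAbs.equiv fK).symm x, h⟩ }
  haveI : CompleteSpace (WithAbs fK) := by
    apply Metric.complete_of_cauchySeq_tendsto
    intro u hu
    obtain ⟨l, hl⟩ := hcomplete (fun n => WithAbs.equiv fK (u n)) (fun ε hε => by
      obtain ⟨N, hN⟩ := Metric.cauchySeq_iff.mp hu ε hε
      exact ⟨N, fun m hm n hn => by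
        have := hN m hm n hn
        rwa [dist_eq_norm] at this⟩)
    refine ⟨(WithAbs.equiv fK).symm l, Metric.tendsto_atTop.mpr (fun ε hε => ?_)⟩
    obtain ⟨N, hN⟩ := hl ε hε
    exact ⟨N, fun n hn => by
      rw [dist_eq_norm]
      exact hN n hn⟩
  letI M1 : Module (WithAbs fK) (WithAbs f₁) := inferInstance
  letI M2 : Module (WithAbs fK) (WithAbs f₂) := inferInstance
  letI : NormedSpace (WithAbs fK) (WithAbs f₁) :=
    { M1 with
      norm_smul_le := fun c x => le_of_eq (by
        show f₁ ((c • x).ofAbs) = fK c.ofAbs * f₁ x.ofAbs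
        show f₁ ((WithAbs.equiv fK c) • (WithAbs.equiv f₁ x)) =
          fK (WithAbs.equiv fK c) * f₁ (WithAbs.equiv f₁ x)
        rw [Algebra.smul_def, map_mul, h₁]) }
  letI : NormedSpace (WithAbs fK) (WithAbs f₂) :=
    { M2 with
      norm_smul_le := fun c x => le_of_eq (by
        show f₂ ((c • x).ofAbs) = fK c.ofAbs * f₂ x.ofAbs
        show f₂ ((WithAbs.equiv fK c) • (WithAbs.equiv f₂ x)) =
          fK (WithAbs.equiv fK c) * f₂ (WithAbs.equiv f₂ x)
        rw [Algebra.smul_def, map_mul, h₂]) }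
  haveI : FiniteDimensional (WithAbs fK) (WithAbs f₂) :=
    haveI : FiniteDimensional K (WithAbs f₂) :=
      LinearEquiv.finiteDimensional (WithAbs.linearEquiv K f₂).symm
    Module.Finite.of_restrictScalars_finite K (WithAbs fK) (WithAbs f₂)
  let g : WithAbs f₂ →ₗ[WithAbs fK] WithAbs f₁ :=
    { toFun := fun x => WithAbs.toAbs f₁ x.ofAbs, map_add' := fun _ _ => rfl, map_smul' := fun _ _ => rfl }
  have hg : Continuous g := g.continuous_of_finiteDimensional
  obtain ⟨C, _, hb⟩ := (⟨g, hg⟩ : WithAbs f₂ →L[WithAbs fK] WithAbs f₁).bound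
  exact abs_le_of_bound f₁ f₂ C (fun x => hb (WithAbs.toAbs f₂ x))

/-- If `K` is complete with respect to a nontrivial absolute value `fK` and `E` is a
finite extension of `K`, then there is at most one absolute value on `E` extending
`fK`. -/
theorem uniqueness_of_extension {K E : Type*} [Field K] [Field E] [Algebra K E]
    [FiniteDimensional K E] (fK : AbsoluteValue K ℝ)
    (hnontriv : ∃ x : K, x ≠ 0 ∧ fK x ≠ 1) (hcomplete : AbsComplete fK)
    (f₁ f₂ : AbsoluteValue E ℝ)
    (h₁ : ∀ c : K, f₁ (algebraMap K E c) = fK c)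
    (h₂ : ∀ c : K, f₂ (algebraMap K E c) = fK c) :
    f₁ = f₂ := by
  ext x
  exact le_antisymm
    (abs_le_aux fK hnontriv hcomplete f₁ f₂ h₁ h₂ x)
    (abs_le_aux fK hnontriv hcomplete f₂ f₁ h₂ h₁ x)
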